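/- arXiv:1004.0633 — 2 statements merged into one kernel-verified Lean document; each statement's English description precedes it below -/
import Mathlib

section
/- For every d ≥ 2 and c ∈ ℂ, the complement ℂ \ K_{d,c} of the filled Julia set of f_{d,c}(z) = z^d + c is connected; that is, K_{d,c} is a full compact set. -/
open Set Metric Bornology

-- the one-step escape estimate
private lemma julia_step {d : ℕ} (hd : 2 ≤ d) (c : ℂ) {w : ℂ}
    (hw : ‖c‖ + 2 < ‖w‖) : 2 * ‖w‖ ≤ ‖w ^ d + c‖ := by
  have h1 : (1:ℝ) ≤ ‖w‖ := by nlinarith [norm_nonneg c]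
  have h2 : ‖w‖ ^ 2 ≤ ‖w‖ ^ d := pow_le_pow_right₀ h1 hd
  have h3 : ‖w ^ d‖ - ‖c‖ ≤ ‖w ^ d + c‖ := by
    have := norm_sub_norm_le (w ^ d) (-c)
    simpa [sub_neg_eq_add] using this
  rw [norm_pow] at h3
  nlinarith [norm_nonneg c, norm_nonneg w]

-- growth under iteration
private lemma julia_grow {d : ℕ} (hd : 2 ≤ d) (c : ℂ) {z : ℂ}
    (hz : ‖c‖ + 2 < ‖z‖) (n : ℕ) :
    ‖c‖ + 2 < ‖(fun w : ℂ => w ^ d + c)^[n] z‖ ∧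
      2 ^ n * (‖c‖ + 2) ≤ ‖(fun w : ℂ => w ^ d + c)^[n] z‖ := by
  induction n with
  | zero => simpa using ⟨hz, hz.le⟩
  | succ n ih =>
    rw [Function.iterate_succ_apply']
    have hs := julia_step hd c ih.1
    have hc : (0:ℝ) ≤ ‖c‖ := norm_nonneg c
    constructor
    · calc ‖c‖ + 2 < ‖(fun w : ℂ => w ^ d + c)^[n] z‖ := ih.1
        _ ≤ 2 * ‖(fun w : ℂ => w ^ d + c)^[n] z‖ := by nlinarith [ih.1]
        _ ≤ _ := hs
    · calc (2:ℝ) ^ (n+1) * (‖c‖ + 2) = 2 * (2 ^ n * (‖c‖ + 2)) := by ring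
        _ ≤ 2 * ‖(fun w : ℂ => w ^ d + c)^[n] z‖ := by linarith [ih.2]
        _ ≤ _ := hs

-- the exterior of a disk in ℂ is path connected
private lemma julia_ext_pathConn {R : ℝ} (hR : 0 < R) :
    IsPathConnected {z : ℂ | R < ‖z‖} := by
  have hrank : 1 < Module.rank ℝ ℂ := by rw [Complex.rank_real_complex]; norm_num
  -- segments along rays stay in the set
  have seg : ∀ y : ℂ, R < ‖y‖ → ∀ s : ℝ, 1 ≤ s →
      JoinedIn {z : ℂ | R < ‖z‖} y (s • y) := by
    intro y hy s hs
    have hconv : Convex ℝ (segment ℝ y (s • y)) := convex_segment _ _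
    have hsub : segment ℝ y (s • y) ⊆ {z : ℂ | R < ‖z‖} := by
      rintro x ⟨t1, t2, ht1, ht2, hsum, rfl⟩
      have : t1 • y + t2 • s • y = (t1 + t2 * s) • y := by
        rw [smul_smul, add_smul]
      rw [this]
      have h1 : (1:ℝ) ≤ t1 + t2 * s := by nlinarith
      have : ‖(t1 + t2 * s) • y‖ = |t1 + t2 * s| * ‖y‖ := by
        rw [norm_smul, Real.norm_eq_abs]
      rw [mem_setOf_eq, this, abs_of_pos (by linarith)]
      nlinarith [norm_nonneg y]
    have hpc : IsPathConnected (segment ℝ y (s • y)) :=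
      hconv.isPathConnected ⟨y, left_mem_segment ℝ y (s • y)⟩
    exact (hpc.joinedIn y (left_mem_segment ℝ y (s • y)) (s • y)
      (right_mem_segment ℝ y (s • y))).mono hsub
  -- base point
  set b : ℂ := ((R + 1 : ℝ) : ℂ) with hb
  have hbnorm : ‖b‖ = R + 1 := by
    rw [hb, Complex.norm_real, Real.norm_eq_abs, abs_of_pos (by linarith)]
  have hbmem : b ∈ {z : ℂ | R < ‖z‖} := by rw [mem_setOf_eq, hbnorm]; linarith
  refine ⟨b, hbmem, ?_⟩
  intro y hy
  have hy' : R < ‖y‖ := hy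
  have hy0 : ‖y‖ ≠ 0 := by intro h; rw [h] at hy'; linarith
  set r : ℝ := max (R + 1) ‖y‖ with hr
  have hr1 : R + 1 ≤ r := le_max_left _ _
  have hr2 : ‖y‖ ≤ r := le_max_right _ _
  have hrpos : 0 < r := by linarith
  -- join b to the sphere of radius r
  have j1 : JoinedIn {z : ℂ | R < ‖z‖} b ((r / (R+1) : ℝ) • b) :=
    seg b hbmem (r/(R+1)) (by rw [le_div_iff₀ (by linarith)]; linarith)
  have j3 : JoinedIn {z : ℂ | R < ‖z‖} y ((r / ‖y‖ : ℝ) • y) :=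
    seg y hy (r/‖y‖) (by rw [le_div_iff₀ (by positivity)]; linarith)
  -- along the sphere
  have hsph : IsPathConnected (sphere (0:ℂ) r) :=
    isPathConnected_sphere hrank 0 hrpos.le
  have hb' : ((r / (R+1) : ℝ) • b) ∈ sphere (0:ℂ) r := by
    rw [mem_sphere_zero_iff_norm, norm_smul, Real.norm_eq_abs, hbnorm,
      abs_of_pos (by positivity)]
    field_simp
  have hy'' : ((r / ‖y‖ : ℝ) • y) ∈ sphere (0:ℂ) r := by
    rw [mem_sphere_zero_iff_norm, norm_smul, Real.norm_eq_abs,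
      abs_of_pos (by positivity)]
    rw [div_mul_cancel₀]
    · exact hy0
  have hsphsub : sphere (0:ℂ) r ⊆ {z : ℂ | R < ‖z‖} := by
    intro w hw
    rw [mem_sphere_zero_iff_norm] at hw
    rw [mem_setOf_eq, hw]; linarith
  have j2 : JoinedIn {z : ℂ | R < ‖z‖} ((r / (R+1) : ℝ) • b) ((r / ‖y‖ : ℝ) • y) :=
    (hsph.joinedIn _ hb' _ hy'').mono hsphsub
  exact (j1.trans j2).trans j3.symm

-- maximum modulus key step: a "piece" of the super-level set away from the
-- exterior must be empty
private lemma julia_key {p : ℂ → ℂ} (hp : Differentiable ℂ p) {R : ℝ}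
    {u v : Set ℂ} (hu : IsOpen u) (hv : IsOpen v)
    (hsub : {z : ℂ | R < ‖p z‖} ⊆ u ∪ v)
    (hVu : {z : ℂ | R < ‖z‖} ⊆ u)
    (hdisj : {z : ℂ | R < ‖p z‖} ∩ u ∩ v = ∅) :
    {z : ℂ | R < ‖p z‖} ∩ v = ∅ := by
  set A := {z : ℂ | R < ‖p z‖} with hA
  set s := A ∩ v with hsdef
  by_contra hne
  obtain ⟨z, hz⟩ : s.Nonempty := Set.nonempty_iff_ne_empty.2 hne
  have hAopen : IsOpen A := isOpen_lt continuous_const (hp.continuous.norm)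
  have hsopen : IsOpen s := hAopen.inter hv
  have hsbd : IsBounded s := by
    refine (isBounded_closedBall (x := (0:ℂ)) (r := R)).subset ?_
    intro w hw
    simp only [mem_closedBall, dist_zero_right]
    by_contra h
    push_neg at h
    have hwu : w ∈ u := hVu h
    have : w ∈ A ∩ u ∩ v := ⟨⟨hw.1, hwu⟩, hw.2⟩
    rw [hdisj] at this
    exact this
  have hfront : ∀ w ∈ frontier s, ‖p w‖ ≤ R := by
    intro w hw
    by_contra h
    push_neg at h
    have hwA : w ∈ A := h
    rw [hsopen.frontier_eq] at hw
    obtain ⟨hwc, hws⟩ := hw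
    rcases hsub hwA with hwu | hwv
    · obtain ⟨y, hyu, hys⟩ := mem_closure_iff.1 hwc u hu hwu
      have : y ∈ A ∩ u ∩ v := ⟨⟨hys.1, hyu⟩, hys.2⟩
      rw [hdisj] at this
      exact this
    · exact hws ⟨hwA, hwv⟩
  have := Complex.norm_le_of_forall_mem_frontier_norm_le hsbd hp.diffContOnCl
    hfront (subset_closure hz)
  exact absurd this (not_le.2 hz.1)

-- each super-level set of an iterate is preconnected
private lemma julia_A_preconn {d : ℕ} (hd : 2 ≤ d) (c : ℂ) (n : ℕ) :
    IsPreconnected {z : ℂ | ‖c‖ + 2 < ‖(fun w : ℂ => w ^ d + c)^[n] z‖} := by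
  set R : ℝ := ‖c‖ + 2 with hRdef
  have hR : 0 < R := by positivity
  have hp : Differentiable ℂ ((fun w : ℂ => w ^ d + c)^[n]) :=
    Differentiable.iterate ((differentiable_pow d).add_const c) n
  set p := (fun w : ℂ => w ^ d + c)^[n] with hpdef
  set A := {z : ℂ | R < ‖p z‖} with hA
  have hVsub : {z : ℂ | R < ‖z‖} ⊆ A := fun z hz => (julia_grow hd c hz n).1
  have hVpc : IsPreconnected {z : ℂ | R < ‖z‖} :=
    (julia_ext_pathConn hR).isConnected.isPreconnected
  intro u v hu hv hsub huA hvA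
  by_contra hne
  have hdisj' : A ∩ u ∩ v = ∅ := by
    rw [Set.inter_assoc, ← Set.not_nonempty_iff_eq_empty]
    exact hne
  -- V is contained in u or in v
  have hVcases : {z : ℂ | R < ‖z‖} ⊆ u ∨ {z : ℂ | R < ‖z‖} ⊆ v := by
    by_contra hcon
    push_neg at hcon
    obtain ⟨h1, h2⟩ := hcon
    obtain ⟨x, hx, hxu⟩ := Set.not_subset.1 h1
    obtain ⟨y, hy, hyv⟩ := Set.not_subset.1 h2
    have hxv : x ∈ v := (hsub (hVsub hx)).resolve_left hxu
    have hyu : y ∈ u := (hsub (hVsub hy)).resolve_right hyv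
    obtain ⟨w, hw⟩ := hVpc u v hu hv (Set.Subset.trans hVsub hsub)
      ⟨y, Set.mem_inter hy hyu⟩ ⟨x, Set.mem_inter hx hxv⟩
    obtain ⟨hwV, hwu, hwv⟩ := hw
    have hcontra : w ∈ A ∩ u ∩ v := Set.mem_inter (Set.mem_inter (hVsub hwV) hwu) hwv
    rw [hdisj'] at hcontra
    exact hcontra
  rcases hVcases with hVu | hVv
  · have hres := julia_key hp hu hv hsub hVu hdisj'
    obtain ⟨x, hx⟩ := hvA
    rw [show {z : ℂ | R < ‖p z‖} ∩ v = A ∩ v from rfl] at hres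
    rw [hres] at hx
    exact hx
  · have hdisj'' : A ∩ v ∩ u = ∅ := by
      rw [Set.inter_assoc, Set.inter_comm v u, ← Set.inter_assoc]; exact hdisj'
    have hres := julia_key hp hv hu (by rwa [Set.union_comm]) hVv hdisj''
    obtain ⟨x, hx⟩ := huA
    rw [show {z : ℂ | R < ‖p z‖} ∩ u = A ∩ u from rfl] at hres
    rw [hres] at hx
    exact hx

/-- The complement of the filled Julia set K_{d,c} of f_{d,c}(z) = z^d + c is connected;
that is, K_{d,c} is a full compact set. -/
theorem filledJulia_compl_isConnected (d : ℕ) (hd : 2 ≤ d) (c : ℂ) :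
    IsConnected {z : ℂ | ∃ R : ℝ, ∀ n : ℕ,
      ‖(fun w : ℂ => w ^ d + c)^[n] z‖ ≤ R}ᶜ := by
  set R : ℝ := ‖c‖ + 2 with hRdef
  have hR : 0 < R := by positivity
  have hR2 : (2:ℝ) ≤ R := by rw [hRdef]; linarith [norm_nonneg c]
  have hEq : {z : ℂ | ∃ R' : ℝ, ∀ n : ℕ,
      ‖(fun w : ℂ => w ^ d + c)^[n] z‖ ≤ R'}ᶜ
      = ⋃ n : ℕ, {z : ℂ | R < ‖(fun w : ℂ => w ^ d + c)^[n] z‖} := by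
    ext z
    simp only [Set.mem_compl_iff, Set.mem_setOf_eq, Set.mem_iUnion, not_exists,
      not_forall, not_le]
    constructor
    · intro h
      exact h R
    · rintro ⟨n, hn⟩ R'
      obtain ⟨k, hk⟩ := pow_unbounded_of_one_lt R' one_lt_two
      refine ⟨k + n, ?_⟩
      have hg := (julia_grow hd c hn k).2
      rw [← Function.iterate_add_apply, ← hRdef] at hg
      have h1 : (2:ℝ) ^ k ≤ 2 ^ k * R :=
        le_mul_of_one_le_right (by positivity) (by linarith)
      linarith [hRdef]
  rw [hEq]
  have hbase : ∀ n : ℕ, ((R + 1 : ℝ) : ℂ) ∈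
      {z : ℂ | R < ‖(fun w : ℂ => w ^ d + c)^[n] z‖} := by
    intro n
    have hb : R < ‖((R + 1 : ℝ) : ℂ)‖ := by
      rw [Complex.norm_real, Real.norm_eq_abs, abs_of_pos (by linarith)]
      linarith
    exact (julia_grow hd c hb n).1
  constructor
  · exact ⟨((R + 1 : ℝ) : ℂ), Set.mem_iUnion.2 ⟨0, hbase 0⟩⟩
  · exact isPreconnected_iUnion ⟨((R + 1 : ℝ) : ℂ), Set.mem_iInter.2 hbase⟩
      (fun n => julia_A_preconn hd c n)
end

section
/- For every degree d ≥ 2, the complement ℂ \ M_d of the Multibrot set is connected; that is, M_d is a full compact set. -/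
open Set Metric Bornology

/-- The `n`-th iterate of `z ↦ z^d + c` at `0`, as a function of `c`. -/
private def mbIter (d : ℕ) : ℕ → ℂ → ℂ
  | 0, _ => 0
  | n + 1, c => (mbIter d n c) ^ d + c

private lemma mbIter_eq (d n : ℕ) (c : ℂ) :
    (fun z : ℂ => z ^ d + c)^[n] 0 = mbIter d n c := by
  induction n with
  | zero => simp [mbIter]
  | succ n ih => rw [Function.iterate_succ_apply', ih]; rfl

private lemma mbIter_diff (d n : ℕ) : Differentiable ℂ (mbIter d n) := by
  induction n with
  | zero => exact differentiable_const 0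
  | succ n ih => exact (ih.pow d).add differentiable_id

private lemma abs_key (d : ℕ) (x c : ℂ) :
    ‖x‖ ^ d - ‖c‖ ≤ ‖x ^ d + c‖ := by
  have h := norm_add_le (x ^ d + c) (-c)
  rw [add_neg_cancel_right, norm_pow, norm_neg] at h
  linarith

private lemma pow_ge_sq {a : ℝ} (ha : 1 ≤ a) {d : ℕ} (hd : 2 ≤ d) : a ^ 2 ≤ a ^ d := by
  calc a ^ 2 = a ^ 2 * 1 := by ring
  _ ≤ a ^ 2 * a ^ (d - 2) := by
      have : (1 : ℝ) ≤ a ^ (d - 2) := one_le_pow₀ ha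
      nlinarith [sq_nonneg a, pow_nonneg (le_trans zero_le_one ha) 2]
  _ = a ^ d := by rw [← pow_add]; congr 1; omega

/-- One step of the escape estimate. -/
private lemma escape_step (d : ℕ) (hd : 2 ≤ d) {c : ℂ} {n : ℕ}
    (h : max 3 (‖c‖) < ‖mbIter d n c‖) :
    max 3 (‖c‖) < ‖mbIter d (n + 1) c‖ ∧
      2 * ‖mbIter d n c‖ ≤ ‖mbIter d (n + 1) c‖ := by
  set a := ‖mbIter d n c‖ with ha
  have h3 : (3 : ℝ) < a := lt_of_le_of_lt (le_max_left _ _) h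
  have hc : ‖c‖ < a := lt_of_le_of_lt (le_max_right _ _) h
  have hk : a ^ d - ‖c‖ ≤ ‖mbIter d (n + 1) c‖ := abs_key d _ c
  have hsq : a ^ 2 ≤ a ^ d := pow_ge_sq (by linarith) hd
  have h2a : 2 * a ≤ ‖mbIter d (n + 1) c‖ := by nlinarith
  refine ⟨?_, h2a⟩
  calc max 3 (‖c‖) < a := h
  _ ≤ 2 * a := by linarith
  _ ≤ _ := h2a

/-- If some iterate exceeds `max 3 |c|`, the orbit is unbounded. -/
private lemma escape (d : ℕ) (hd : 2 ≤ d) {c : ℂ} {n : ℕ}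
    (h : max 3 (‖c‖) < ‖mbIter d n c‖) (R : ℝ) :
    ∃ m : ℕ, R < ‖mbIter d m c‖ := by
  have key : ∀ k : ℕ, max 3 (‖c‖) < ‖mbIter d (n + k) c‖ ∧
      2 ^ k * ‖mbIter d n c‖ ≤ ‖mbIter d (n + k) c‖ := by
    intro k
    induction k with
    | zero => exact ⟨h, by simp⟩
    | succ k ih =>
        obtain ⟨h1, h2⟩ := escape_step d hd ih.1
        refine ⟨h1, ?_⟩
        have : 2 * (2 ^ k * ‖mbIter d n c‖) ≤
            2 * ‖mbIter d (n + k) c‖ := by linarith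
        calc 2 ^ (k + 1) * ‖mbIter d n c‖
            = 2 * (2 ^ k * ‖mbIter d n c‖) := by ring
        _ ≤ 2 * ‖mbIter d (n + k) c‖ := this
        _ ≤ ‖mbIter d (n + k + 1) c‖ := h2
  obtain ⟨k, hk⟩ := pow_unbounded_of_one_lt (y := (2 : ℝ)) R one_lt_two
  refine ⟨n + k, ?_⟩
  have h3 : (3 : ℝ) < ‖mbIter d n c‖ := lt_of_le_of_lt (le_max_left _ _) h
  have hpk : (0 : ℝ) < 2 ^ k := by positivity
  have := (key k).2
  nlinarith

/-- Tail estimate: for `4 ≤ |c|`, all iterates (from the first on) have `|c| ≤ |P_n c|`. -/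
private lemma tail (d : ℕ) (hd : 2 ≤ d) {c : ℂ} (hc : 4 ≤ ‖c‖) (n : ℕ) :
    ‖c‖ ≤ ‖mbIter d (n + 1) c‖ := by
  induction n with
  | zero =>
      simp only [mbIter, zero_pow (by omega : d ≠ 0), zero_add]
      exact le_refl _
  | succ n ih =>
      set a := ‖mbIter d (n + 1) c‖ with ha
      have hk : a ^ d - ‖c‖ ≤ ‖mbIter d (n + 2) c‖ := abs_key d _ c
      have hsq : a ^ 2 ≤ a ^ d := pow_ge_sq (by linarith) hd
      nlinarith

/-- The tail `{z | R < |z|}` of `ℂ` is preconnected (for `0 ≤ R`). -/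
private lemma tail_preconnected {R : ℝ} (hR : 0 ≤ R) :
    IsPreconnected {z : ℂ | R < ‖z‖} := by
  have hrank : (1 : Cardinal) < Module.rank ℝ ℂ := by
    rw [Complex.rank_real_complex]; exact Nat.one_lt_ofNat
  have hray : IsPreconnected ((fun x : ℝ => (x : ℂ)) '' Ioi R) :=
    (isPreconnected_Ioi).image _ (Complex.continuous_ofReal.continuousOn)
  have hrayss : (fun x : ℝ => (x : ℂ)) '' Ioi R ⊆ {z : ℂ | R < ‖z‖} := by
    rintro _ ⟨x, hx, rfl⟩
    simp only [mem_setOf_eq, Complex.norm_real, Real.norm_eq_abs]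
    exact lt_of_lt_of_le hx (le_abs_self x)
  have base : ((R + 1 : ℝ) : ℂ) ∈ (fun x : ℝ => (x : ℂ)) '' Ioi R :=
    ⟨R + 1, by simp, rfl⟩
  -- write the set as a union of (sphere ∪ ray) pieces
  have hunion : {z : ℂ | R < ‖z‖} =
      ⋃₀ ((fun z : ℂ => sphere (0 : ℂ) (‖z‖) ∪ (fun x : ℝ => (x : ℂ)) '' Ioi R) ''
        {z : ℂ | R < ‖z‖}) := by
    apply Subset.antisymm
    · intro z hz
      exact ⟨_, ⟨z, hz, rfl⟩, Or.inl (by simp)⟩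
    · rintro w ⟨_, ⟨z, hz, rfl⟩, hw⟩
      rcases hw with hw | hw
      · simp only [mem_sphere_iff_norm, sub_zero] at hw
        simpa [mem_setOf_eq, hw] using hz
      · exact hrayss hw
  rw [hunion]
  apply isPreconnected_sUnion ((R + 1 : ℝ) : ℂ)
  · rintro _ ⟨z, hz, rfl⟩
    exact Or.inr base
  · rintro _ ⟨z, hz, rfl⟩
    apply IsPreconnected.union ((‖z‖ : ℝ) : ℂ)
    · simp [mem_sphere_iff_norm]
    · exact ⟨‖z‖, hz, rfl⟩
    · exact isPreconnected_sphere hrank 0 (‖z‖)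
    · exact hray

/-- Core lemma: for entire `f` which is large outside a ball, `{z | r < |f z|}`
is preconnected. Uses the maximum modulus principle. -/
private lemma superlevel_preconnected (f : ℂ → ℂ) (hf : Differentiable ℂ f) (r R : ℝ)
    (hR : 0 ≤ R) (hRf : ∀ z : ℂ, R < ‖z‖ → r < ‖f z‖) :
    IsPreconnected {z : ℂ | r < ‖f z‖} := by
  set V := {z : ℂ | r < ‖f z‖} with hV
  set T := {z : ℂ | R < ‖z‖} with hT
  have hVopen : IsOpen V := by
    have : Continuous fun z => ‖f z‖ := continuous_norm.comp hf.continuous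
    exact isOpen_lt continuous_const this
  have hTV : T ⊆ V := fun z hz => hRf z hz
  have hTpre : IsPreconnected T := tail_preconnected hR
  have ht0 : ((R + 1 : ℝ) : ℂ) ∈ T := by
    simp only [hT, mem_setOf_eq, Complex.norm_real, Real.norm_eq_abs]
    have : R < R + 1 := by linarith
    exact lt_of_lt_of_le this (le_abs_self _)
  -- every connected component of V meets T
  have claim : ∀ z ∈ V, ∃ y, y ∈ connectedComponentIn V z ∩ T := by
    intro z hz
    set C := connectedComponentIn V z with hC
    have hzC : z ∈ C := mem_connectedComponentIn hz
    have hCopen : IsOpen C := hVopen.connectedComponentIn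
    by_cases hb : IsBounded C
    · exfalso
      have frontier_bound : ∀ w ∈ frontier C, ‖f w‖ ≤ r := by
        intro w hw
        by_contra hlt
        push_neg at hlt
        have hwV : w ∈ V := by
          simp only [hV, mem_setOf_eq]; exact hlt
        rw [hCopen.frontier_eq] at hw
        obtain ⟨hwcl, hwnC⟩ := hw
        have hD : IsOpen (connectedComponentIn V w) := hVopen.connectedComponentIn
        have hwD : w ∈ connectedComponentIn V w := mem_connectedComponentIn hwV
        obtain ⟨y, hyD, hyC⟩ := mem_closure_iff.mp hwcl _ hD hwD
        have h1 : connectedComponentIn V w = connectedComponentIn V y :=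
          connectedComponentIn_eq hyD
        have h2 : connectedComponentIn V z = connectedComponentIn V y :=
          connectedComponentIn_eq hyC
        have : w ∈ connectedComponentIn V z := by rw [h2, ← h1]; exact hwD
        exact hwnC this
      have hd : DiffContOnCl ℂ f C := hf.diffContOnCl
      have := Complex.norm_le_of_forall_mem_frontier_norm_le hb hd frontier_bound
        (subset_closure hzC)
      exact absurd hz (by simp only [hV, mem_setOf_eq]; linarith)
    · rw [isBounded_iff_forall_norm_le] at hb
      push_neg at hb
      obtain ⟨y, hyC, hy⟩ := hb R
      exact ⟨y, hyC, by simpa [hT] using hy⟩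
  rcases eq_empty_or_nonempty V with hVe | hVne
  · rw [hVe]; exact isPreconnected_empty
  have hunion : V = ⋃₀ ((fun z : ℂ => connectedComponentIn V z ∪ T) '' V) := by
    apply Subset.antisymm
    · intro z hz
      exact ⟨_, ⟨z, hz, rfl⟩, Or.inl (mem_connectedComponentIn hz)⟩
    · rintro w ⟨_, ⟨z, hz, rfl⟩, hw⟩
      rcases hw with hw | hw
      · exact connectedComponentIn_subset V z hw
      · exact hTV hw
  rw [hunion]
  apply isPreconnected_sUnion ((R + 1 : ℝ) : ℂ)
  · rintro _ ⟨z, hz, rfl⟩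
    exact Or.inr ht0
  · rintro _ ⟨z, hz, rfl⟩
    obtain ⟨y, hy1, hy2⟩ := claim z hz
    exact IsPreconnected.union y hy1 hy2 isPreconnected_connectedComponentIn hTpre

/-- The complement of the Multibrot set M_d is connected; M_d is a full compact set. -/
theorem multibrot_compl_isConnected (d : ℕ) (hd : 2 ≤ d) :
    IsConnected {c : ℂ | ∃ R : ℝ, ∀ n : ℕ,
      ‖(fun z : ℂ => z ^ d + c)^[n] 0‖ ≤ R}ᶜ := by
  set U := {c : ℂ | ∃ R : ℝ, ∀ n : ℕ,
      ‖(fun z : ℂ => z ^ d + c)^[n] 0‖ ≤ R}ᶜ with hU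
  set B : ℕ → Set ℂ := fun n => {c : ℂ | 3 < ‖mbIter d n c‖} with hB
  -- the first iterate is just c
  have h1 : ∀ c : ℂ, mbIter d 1 c = c := by
    intro c; simp [mbIter, zero_pow (by omega : d ≠ 0)]
  -- B n ⊆ U for n ≥ 1
  have hBU : ∀ n : ℕ, B (n + 1) ⊆ U := by
    intro n c hc
    simp only [hB, mem_setOf_eq] at hc
    -- produce an escape certificate: some iterate exceeds max 3 |c|
    have hesc : ∃ m : ℕ, max 3 (‖c‖) < ‖mbIter d m c‖ := by
      by_cases h3c : ‖c‖ ≤ 3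
      · exact ⟨n + 1, by rw [max_eq_left h3c]; exact hc⟩
      · push_neg at h3c
        refine ⟨2, ?_⟩
        have hk : ‖c‖ ^ d - ‖c‖ ≤ ‖mbIter d 2 c‖ := by
          have h2 : mbIter d 2 c = c ^ d + c := by
            rw [show mbIter d 2 c = (mbIter d 1 c) ^ d + c from rfl, h1]
          rw [h2]
          exact abs_key d c c
        have hsq : ‖c‖ ^ 2 ≤ ‖c‖ ^ d := pow_ge_sq (by linarith) hd
        have hmax : max 3 (‖c‖) = ‖c‖ := max_eq_right (le_of_lt h3c)
        rw [hmax]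
        nlinarith
    obtain ⟨m, hm⟩ := hesc
    simp only [hU, mem_compl_iff, mem_setOf_eq, not_exists, not_forall]
    intro R
    obtain ⟨k, hk⟩ := escape d hd hm R
    exact ⟨k, by rw [mbIter_eq]; exact not_le.mpr hk⟩
  -- U is the union of the pieces B 1 ∪ B (n+1)
  have hcover : U = ⋃ n : ℕ, (B 1 ∪ B (n + 1)) := by
    apply Subset.antisymm
    · intro c hc
      simp only [hU, mem_compl_iff, mem_setOf_eq, not_exists, not_forall] at hc
      obtain ⟨n, hn⟩ := hc 3
      rw [not_le, mbIter_eq] at hn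
      have hn0 : n ≠ 0 := by
        intro h; rw [h] at hn; simp [mbIter] at hn; linarith
      obtain ⟨m, rfl⟩ := Nat.exists_eq_succ_of_ne_zero hn0
      exact mem_iUnion.mpr ⟨m, Or.inr hn⟩
    · intro c hc
      obtain ⟨n, hn⟩ := mem_iUnion.mp hc
      rcases hn with hn | hn
      · exact hBU 0 hn
      · exact hBU n hn
  -- each B (n+1) is preconnected
  have hBpre : ∀ n : ℕ, IsPreconnected (B (n + 1)) := by
    intro n
    apply superlevel_preconnected _ (mbIter_diff d (n + 1)) 3 4 (by norm_num)
    intro z hz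
    have := tail d hd (le_of_lt hz) n
    linarith
  -- the point 5 is in every piece
  have h5 : ∀ n : ℕ, (5 : ℂ) ∈ B (n + 1) := by
    intro n
    simp only [hB, mem_setOf_eq]
    have h45 : (4 : ℝ) ≤ ‖(5 : ℂ)‖ := by
      rw [show ((5 : ℂ)) = ((5 : ℝ) : ℂ) by norm_num, Complex.norm_real, Real.norm_eq_abs]
      rw [abs_of_nonneg (by norm_num : (0:ℝ) ≤ 5)]; norm_num
    have := tail d hd h45 n
    linarith
  rw [hcover]
  constructor
  · exact ⟨5, mem_iUnion.mpr ⟨0, Or.inl (h5 0)⟩⟩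
  · apply isPreconnected_iUnion
    · exact ⟨5, mem_iInter.mpr fun n => Or.inl (h5 0)⟩
    · intro n
      exact IsPreconnected.union 5 (h5 0) (h5 n) (hBpre 0) (hBpre n)
end
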